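/- Let ξ(x) = (1+|x|)^{-(1+β)} with 0 < β ≤ 1 and ξ_{n,j}(x) = 2^{n/2} ξ(2^n x - j). Suppose w : ℤ → (0, ∞) is a sequence with ∑_{n ∈ ℤ} 1/w(n) < ∞. If coefficients a_{n,j} (n, j ∈ ℤ) satisfy ∑_{n,j ∈ ℤ} a_{n,j}² w(n) < ∞, then ∑_{n,j ∈ ℤ} |a_{n,j}| ξ_{n,j}(x) < ∞ for almost every x ∈ ℝ. -/

import Mathlib

open MeasureTheory Set

lemma aux_scale (g : ℝ → ENNReal) (hg : Measurable g) (c : ℝ) (hc : c ≠ 0) :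
    ∫⁻ x : ℝ, g (c * x) = ENNReal.ofReal |c⁻¹| * ∫⁻ y : ℝ, g y := by
  have h := lintegral_map (μ := volume) hg (measurable_const_mul c)
  rw [Real.map_volume_mul_left hc, lintegral_smul_measure] at h
  simpa using h.symm

set_option maxHeartbeats 1000000

/-- If `∑_n 1/w(n) < ∞` and `∑_{n,j} a_{n,j}² w(n) < ∞`, then the series
`∑_{n,j} |a_{n,j}| ξ_{n,j}(x)` with `ξ_{n,j}(x) = 2^{n/2}(1+|2^n x - j|)^{-(1+β)}`
converges for almost every `x ∈ ℝ`. -/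
theorem stmt_6 (β : ℝ) (hβ : 0 < β) (hβ1 : β ≤ 1)
    (w : ℤ → ℝ) (hw : ∀ n, 0 < w n) (hws : Summable fun n => 1 / w n)
    (a : ℤ × ℤ → ℝ) (ha : Summable fun p => (a p) ^ 2 * w p.1) :
    ∀ᵐ x : ℝ, Summable fun p : ℤ × ℤ =>
      |a p| * ((2 : ℝ) ^ ((p.1 : ℝ) / 2) * (1 + |(2 : ℝ) ^ p.1 * x - (p.2 : ℝ)|) ^ (-(1 + β))) := by
  -- basic notation
  set φ : ℝ → ℝ := fun y => (1 + |y|) ^ (-(1 + β)) with hφ_def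
  have hφ_nonneg : ∀ y, 0 ≤ φ y := fun y => Real.rpow_nonneg (by positivity) _
  have hφ_meas : Measurable φ := by
    have : Measurable fun y : ℝ => (1 + ‖y‖) ^ (-(1 + β)) := by fun_prop
    simpa only [Real.norm_eq_abs] using this
  set ξ : ℤ × ℤ → ℝ → ℝ := fun p x => (2 : ℝ) ^ ((p.1 : ℝ) / 2) * φ ((2 : ℝ) ^ p.1 * x - p.2)
    with hξ_def
  have hξ_nonneg : ∀ p x, 0 ≤ ξ p x := fun p x =>
    mul_nonneg (Real.rpow_nonneg (by norm_num) _) (hφ_nonneg _)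
  set F : ℤ × ℤ → ℝ → ENNReal := fun p x => ENNReal.ofReal (|a p| * ξ p x) with hF_def
  have hF_meas : ∀ p, Measurable (F p) := by
    intro p
    apply ENNReal.measurable_ofReal.comp
    apply Measurable.const_mul
    exact (hφ_meas.comp (by fun_prop)).const_mul _
  -- the constant C : the full-line integral of φ
  set C : ENNReal := ∫⁻ y : ℝ, ENNReal.ofReal (φ y) with hC_def
  have hC : C < ⊤ := by
    have h := finite_integral_one_add_norm (E := ℝ) (μ := volume) (r := 1 + β)
      (by simp; linarith)
    simpa [hC_def, hφ_def, Real.norm_eq_abs] using h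
  -- the constant K : the sum over a lattice of the maximal translates
  set ψ : ℤ → ℝ := fun i => (max 1 |(i : ℝ)|) ^ (-(1 + β)) with hψ_def
  have hψ_nonneg : ∀ i, 0 ≤ ψ i := fun i => Real.rpow_nonneg (by positivity) _
  have hψ_sum : Summable ψ := by
    have h1 : Summable fun n : ℕ => ((n : ℝ)) ^ (-(1 + β)) :=
      Real.summable_nat_rpow.2 (by linarith)
    have hnat : Summable fun n : ℕ => ψ (n : ℤ) := by
      rw [← summable_nat_add_iff 1]
      refine ((summable_nat_add_iff 1).2 h1).congr fun n => ?_
      have h1n : (1 : ℝ) ≤ ((n + 1 : ℕ) : ℝ) := by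
        exact_mod_cast Nat.succ_le_succ (Nat.zero_le n)
      have habs : |((((n : ℕ) + 1 : ℕ) : ℤ) : ℝ)| = ((n + 1 : ℕ) : ℝ) := by
        push_cast; rw [abs_of_nonneg (by positivity)]
      simp only [ψ, habs, max_eq_right h1n]
    apply Summable.of_nat_of_neg hnat
    apply hnat.congr
    intro n
    have : |((-(n : ℤ) : ℤ) : ℝ)| = |((n : ℤ) : ℝ)| := by push_cast; rw [abs_neg]
    simp only [ψ, this]
  set K : ENNReal := ∑' i : ℤ, ENNReal.ofReal (ψ i) with hK_def
  have hK : K < ⊤ := by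
    rw [hK_def, ← ENNReal.ofReal_tsum_of_nonneg hψ_nonneg hψ_sum]
    exact ENNReal.ofReal_lt_top
  -- the pointwise lattice bound
  have key_pt : ∀ (t : ℝ) (j : ℤ), φ (t - j) ≤ ψ (j - ⌊t⌋) := by
    intro t j
    set m := ⌊t⌋ with hm
    have h1 : max 1 |((j - m : ℤ) : ℝ)| ≤ 1 + |t - j| := by
      rcases max_cases 1 |((j - m : ℤ) : ℝ)| with ⟨he, _⟩ | ⟨he, _⟩ <;> rw [he]
      · have := abs_nonneg (t - (j:ℝ)); linarith
      · push_cast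
        have h2 : |(j : ℝ) - m| ≤ |(j : ℝ) - t| + |t - m| := by
          calc |(j : ℝ) - m| = |((j:ℝ) - t) + (t - m)| := by ring_nf
          _ ≤ _ := abs_add_le _ _
        have h3 : |t - (m : ℝ)| < 1 := by
          rw [abs_of_nonneg (by linarith [Int.floor_le t])]
          linarith [Int.lt_floor_add_one t]
        have h4 : |(j:ℝ) - t| = |t - j| := abs_sub_comm _ _
        linarith
    exact Real.rpow_le_rpow_of_nonpos (lt_of_lt_of_le zero_lt_one (le_max_left _ _)) h1
      (by linarith)
  have hKrow : ∀ t : ℝ, ∑' j : ℤ, ENNReal.ofReal (φ (t - j)) ≤ K := by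
    intro t
    calc ∑' j : ℤ, ENNReal.ofReal (φ (t - j))
        ≤ ∑' j : ℤ, ENNReal.ofReal (ψ (j - ⌊t⌋)) :=
          ENNReal.tsum_le_tsum fun j => ENNReal.ofReal_le_ofReal (key_pt t j)
      _ = K := by
          rw [hK_def]
          exact Equiv.tsum_eq (Equiv.subRight ⌊t⌋) (fun i => ENNReal.ofReal (ψ i))
  -- main step : for each natural A, a.e. summability on [-A, A]
  have main : ∀ A : ℕ, ∀ᵐ x : ℝ ∂(volume.restrict (Icc (-(A:ℝ)) A)),
      Summable fun p : ℤ × ℤ => |a p| * ξ p x := by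
    intro A
    set s : Set ℝ := Icc (-(A:ℝ)) A with hs_def
    have hs_meas : MeasurableSet s := measurableSet_Icc
    -- the partial integrals
    set I : ℤ × ℤ → ENNReal := fun p => ∫⁻ x in s, ENNReal.ofReal (ξ p x) with hI_def
    have hIF : ∀ p, (∫⁻ x in s, F p x) = ENNReal.ofReal |a p| * I p := by
      intro p
      rw [hI_def]
      simp only [hF_def]
      rw [← lintegral_const_mul _ (by fun_prop)]
      congr 1 with x
      rw [← ENNReal.ofReal_mul (abs_nonneg _)]
    -- bound B1 : I p ≤ 2^{-n/2} C
    have hB1 : ∀ p : ℤ × ℤ, I p ≤ ENNReal.ofReal ((2:ℝ) ^ (-(p.1:ℝ)/2)) * C := by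
      intro ⟨n, j⟩
      have hpow : (0:ℝ) < (2:ℝ) ^ n := zpow_pos (by norm_num) n
      have step1 : I (n, j) ≤ ENNReal.ofReal ((2:ℝ) ^ ((n:ℝ)/2)) *
          ∫⁻ x : ℝ, ENNReal.ofReal (φ ((2:ℝ) ^ n * x - j)) := by
        rw [hI_def]
        calc (∫⁻ x in s, ENNReal.ofReal (ξ (n, j) x))
            ≤ ∫⁻ x : ℝ, ENNReal.ofReal (ξ (n, j) x) := setLIntegral_le_lintegral _ _
          _ = ENNReal.ofReal ((2:ℝ) ^ ((n:ℝ)/2)) *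
              ∫⁻ x : ℝ, ENNReal.ofReal (φ ((2:ℝ) ^ n * x - j)) := by
              rw [← lintegral_const_mul _ (by
                exact ENNReal.measurable_ofReal.comp (hφ_meas.comp (by fun_prop)))]
              congr 1 with x
              rw [← ENNReal.ofReal_mul (Real.rpow_nonneg (by norm_num) _)]
      have step2 : (∫⁻ x : ℝ, ENNReal.ofReal (φ ((2:ℝ) ^ n * x - j)))
          = ENNReal.ofReal ((2:ℝ) ^ (-n : ℤ)) * C := by
        have hmeas : Measurable fun y : ℝ => ENNReal.ofReal (φ (y - j)) :=
          ENNReal.measurable_ofReal.comp (hφ_meas.comp (by fun_prop))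
        have := aux_scale (fun y => ENNReal.ofReal (φ (y - j))) hmeas ((2:ℝ) ^ n) hpow.ne'
        rw [this, lintegral_sub_right_eq_self (fun y => ENNReal.ofReal (φ y)) (j:ℝ)]
        congr 2
        rw [abs_of_nonneg (by positivity), zpow_neg]
      calc I (n, j) ≤ ENNReal.ofReal ((2:ℝ) ^ ((n:ℝ)/2)) *
            (ENNReal.ofReal ((2:ℝ) ^ (-n : ℤ)) * C) := by rw [← step2]; exact step1
        _ = ENNReal.ofReal ((2:ℝ) ^ (-(n:ℝ)/2)) * C := by
            rw [← mul_assoc, ← ENNReal.ofReal_mul (Real.rpow_nonneg (by norm_num) _)]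
            congr 2
            rw [← Real.rpow_intCast (2:ℝ) (-n), ← Real.rpow_add (by norm_num)]
            congr 1
            push_cast
            ring
    -- bound B2 : row sums
    have hB2 : ∀ n : ℤ, ∑' j : ℤ, I (n, j) ≤
        ENNReal.ofReal ((2:ℝ) ^ ((n:ℝ)/2)) * (ENNReal.ofReal (2 * A) * K) := by
      intro n
      have hswap : ∑' j : ℤ, I (n, j) = ∫⁻ x in s, ∑' j : ℤ, ENNReal.ofReal (ξ (n, j) x) :=
        (lintegral_tsum fun j => (ENNReal.measurable_ofReal.comp
          ((hφ_meas.comp (by fun_prop)).const_mul _)).aemeasurable).symm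
      rw [hswap]
      have hpt : ∀ x : ℝ, ∑' j : ℤ, ENNReal.ofReal (ξ (n, j) x) ≤
          ENNReal.ofReal ((2:ℝ) ^ ((n:ℝ)/2)) * K := by
        intro x
        calc ∑' j : ℤ, ENNReal.ofReal (ξ (n, j) x)
            = ENNReal.ofReal ((2:ℝ) ^ ((n:ℝ)/2)) *
              ∑' j : ℤ, ENNReal.ofReal (φ ((2:ℝ) ^ n * x - j)) := by
              rw [← ENNReal.tsum_mul_left]
              congr 1 with j
              rw [← ENNReal.ofReal_mul (Real.rpow_nonneg (by norm_num) _)]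
          _ ≤ _ := mul_le_mul_right (hKrow ((2:ℝ) ^ n * x)) _
      calc (∫⁻ x in s, ∑' j : ℤ, ENNReal.ofReal (ξ (n, j) x))
          ≤ ∫⁻ _ in s, ENNReal.ofReal ((2:ℝ) ^ ((n:ℝ)/2)) * K :=
            lintegral_mono fun x => hpt x
        _ = ENNReal.ofReal ((2:ℝ) ^ ((n:ℝ)/2)) * K * volume s := by
            rw [setLIntegral_const]
        _ ≤ ENNReal.ofReal ((2:ℝ) ^ ((n:ℝ)/2)) * (ENNReal.ofReal (2 * A) * K) := by
            rw [mul_assoc, mul_comm K]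
            apply mul_le_mul_right
            apply mul_le_mul_left
            rw [hs_def, Real.volume_Icc]
            apply ENNReal.ofReal_le_ofReal
            ring_nf
            rfl
    -- squares of row sums are uniformly bounded
    set M : ENNReal := C * (ENNReal.ofReal (2 * A) * K) with hM_def
    have hM : M < ⊤ := by
      rw [hM_def]
      exact ENNReal.mul_lt_top hC (ENNReal.mul_lt_top ENNReal.ofReal_lt_top hK)
    have hB3 : ∀ n : ℤ, ∑' j : ℤ, I (n, j) * I (n, j) ≤ M := by
      intro n
      have hcancel : ENNReal.ofReal ((2:ℝ) ^ (-(n:ℝ)/2)) *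
          ENNReal.ofReal ((2:ℝ) ^ ((n:ℝ)/2)) = 1 := by
        rw [← ENNReal.ofReal_mul (Real.rpow_nonneg (by norm_num) _),
          ← Real.rpow_add (by norm_num : (0:ℝ) < 2)]
        have h0 : -(n:ℝ)/2 + (n:ℝ)/2 = 0 := by ring
        rw [h0, Real.rpow_zero, ENNReal.ofReal_one]
      calc ∑' j : ℤ, I (n, j) * I (n, j)
          ≤ ∑' j : ℤ, ENNReal.ofReal ((2:ℝ) ^ (-(n:ℝ)/2)) * C * I (n, j) :=
            ENNReal.tsum_le_tsum fun j => mul_le_mul_left (hB1 (n, j)) _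
        _ = ENNReal.ofReal ((2:ℝ) ^ (-(n:ℝ)/2)) * C * ∑' j : ℤ, I (n, j) :=
            ENNReal.tsum_mul_left
        _ ≤ ENNReal.ofReal ((2:ℝ) ^ (-(n:ℝ)/2)) * C *
            (ENNReal.ofReal ((2:ℝ) ^ ((n:ℝ)/2)) * (ENNReal.ofReal (2 * A) * K)) :=
            mul_le_mul_right (hB2 n) _
        _ = M := by
            rw [hM_def]
            calc ENNReal.ofReal ((2:ℝ) ^ (-(n:ℝ)/2)) * C *
                (ENNReal.ofReal ((2:ℝ) ^ ((n:ℝ)/2)) * (ENNReal.ofReal (2 * A) * K))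
                = (ENNReal.ofReal ((2:ℝ) ^ (-(n:ℝ)/2)) * ENNReal.ofReal ((2:ℝ) ^ ((n:ℝ)/2))) *
                  (C * (ENNReal.ofReal (2 * A) * K)) := by ring
              _ = C * (ENNReal.ofReal (2 * A) * K) := by rw [hcancel, one_mul]
    -- AM-GM style bound
    have hAMGM : ∀ p : ℤ × ℤ, ENNReal.ofReal |a p| * I p ≤
        ENNReal.ofReal ((a p) ^ 2 * w p.1) + I p * I p / ENNReal.ofReal (w p.1) := by
      intro p
      set W : ENNReal := ENNReal.ofReal (w p.1) with hW_def
      have hW0 : W ≠ 0 := by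
        simp [hW_def, ENNReal.ofReal_eq_zero, not_le, hw p.1]
      have hWt : W ≠ ⊤ := ENNReal.ofReal_ne_top
      rcases le_or_gt (ENNReal.ofReal |a p| * W) (I p) with h | h
      · have : ENNReal.ofReal |a p| ≤ I p / W := (ENNReal.le_div_iff_mul_le
          (Or.inl hW0) (Or.inl hWt)).2 h
        calc ENNReal.ofReal |a p| * I p ≤ I p / W * I p := mul_le_mul_left this _
          _ = I p * I p / W := by
              rw [div_eq_mul_inv, div_eq_mul_inv]; ring
          _ ≤ _ := le_add_self
      · calc ENNReal.ofReal |a p| * I p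
            ≤ ENNReal.ofReal |a p| * (ENNReal.ofReal |a p| * W) :=
              mul_le_mul_right h.le _
          _ = ENNReal.ofReal ((a p) ^ 2 * w p.1) := by
              rw [← mul_assoc, ← ENNReal.ofReal_mul (abs_nonneg _), abs_mul_abs_self, hW_def,
                ← ENNReal.ofReal_mul (mul_self_nonneg _)]
              congr 1
              ring
          _ ≤ _ := le_self_add
    -- total bound
    have hT : (∑' p : ℤ × ℤ, ∫⁻ x in s, F p x) < ⊤ := by
      have h1 : (∑' p : ℤ × ℤ, ENNReal.ofReal ((a p) ^ 2 * w p.1)) < ⊤ := by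
        rw [← ENNReal.ofReal_tsum_of_nonneg (fun p : ℤ × ℤ => mul_nonneg (sq_nonneg (a p)) (hw p.1).le) ha]
        exact ENNReal.ofReal_lt_top
      have h2 : (∑' p : ℤ × ℤ, I p * I p / ENNReal.ofReal (w p.1)) < ⊤ := by
        rw [ENNReal.tsum_prod']
        have hbound : ∀ n : ℤ, (∑' j : ℤ, I (n, j) * I (n, j) / ENNReal.ofReal (w n)) ≤
            M * ENNReal.ofReal (1 / w n) := by
          intro n
          have : (∑' j : ℤ, I (n, j) * I (n, j) / ENNReal.ofReal (w n)) =
              (∑' j : ℤ, I (n, j) * I (n, j)) * (ENNReal.ofReal (w n))⁻¹ := by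
            simp_rw [div_eq_mul_inv]
            exact ENNReal.tsum_mul_right
          rw [this, one_div, ← ENNReal.ofReal_inv_of_pos (hw n)]
          exact mul_le_mul_left (hB3 n) _
        calc (∑' n : ℤ, ∑' j : ℤ, I (n, j) * I (n, j) / ENNReal.ofReal (w n))
            ≤ ∑' n : ℤ, M * ENNReal.ofReal (1 / w n) := ENNReal.tsum_le_tsum hbound
          _ = M * ∑' n : ℤ, ENNReal.ofReal (1 / w n) := ENNReal.tsum_mul_left
          _ < ⊤ := by
              apply ENNReal.mul_lt_top hM
              rw [← ENNReal.ofReal_tsum_of_nonneg (fun n => (one_div_nonneg).2 (hw n).le) hws]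
              exact ENNReal.ofReal_lt_top
      calc (∑' p : ℤ × ℤ, ∫⁻ x in s, F p x)
          = ∑' p : ℤ × ℤ, ENNReal.ofReal |a p| * I p := by
            congr 1 with p; exact hIF p
        _ ≤ ∑' p : ℤ × ℤ, (ENNReal.ofReal ((a p) ^ 2 * w p.1) +
            I p * I p / ENNReal.ofReal (w p.1)) := ENNReal.tsum_le_tsum hAMGM
        _ = (∑' p : ℤ × ℤ, ENNReal.ofReal ((a p) ^ 2 * w p.1)) +
            ∑' p : ℤ × ℤ, I p * I p / ENNReal.ofReal (w p.1) := ENNReal.tsum_add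
        _ < ⊤ := ENNReal.add_lt_top.2 ⟨h1, h2⟩
    -- conclude a.e. finiteness on s
    have hswap : (∫⁻ x in s, ∑' p : ℤ × ℤ, F p x) = ∑' p : ℤ × ℤ, ∫⁻ x in s, F p x :=
      lintegral_tsum fun p => (hF_meas p).aemeasurable
    have hfin : ∀ᵐ x : ℝ ∂(volume.restrict s), (∑' p : ℤ × ℤ, F p x) < ⊤ := by
      apply ae_lt_top (by exact Measurable.ennreal_tsum hF_meas)
      rw [hswap]
      exact hT.ne
    filter_upwards [hfin] with x hx
    have hsum : Summable fun p : ℤ × ℤ => (F p x).toReal :=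
      ENNReal.summable_toReal hx.ne
    apply hsum.congr
    intro p
    rw [hF_def]
    exact ENNReal.toReal_ofReal (mul_nonneg (abs_nonneg _) (hξ_nonneg p x))
  -- combine over all A
  have main' : ∀ A : ℕ, ∀ᵐ x : ℝ, x ∈ Icc (-(A:ℝ)) A →
      Summable fun p : ℤ × ℤ => |a p| * ξ p x := fun A =>
    (ae_restrict_iff' measurableSet_Icc).1 (main A)
  have := (ae_all_iff.2 main')
  filter_upwards [this] with x hx
  have hA : x ∈ Icc (-((⌈|x|⌉₊ : ℕ) : ℝ)) ((⌈|x|⌉₊ : ℕ) : ℝ) := by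
    have h1 := Nat.le_ceil |x|
    have h2 := neg_abs_le x
    have h3 := le_abs_self x
    exact ⟨by linarith, by linarith⟩
  exact hx ⌈|x|⌉₊ hA
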